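/- The subalgebra H_1 of W_2, consisting of commutative bilinear operators A on the 2-dimensional symplectic space (E_2, <,>) satisfying <A(x,y),z> + <y,A(x,z)> = 0 for all x,y,z, equals the span of ξ_1−ξ_5, ξ_2−ξ_6, ξ_3, ξ_4; in particular H_1 coincides with S_2. -/
import Mathlib


section

variable (K : Type*) [Field K] [CharZero K]

/-- The 2-dimensional space `E₂`. -/
abbrev V2 := Fin 2 → K

/-- The basis `e 0, e 1` of `E₂`. -/
noncomputable def e (i : Fin 2) : V2 K := Pi.single i 1

/-- `W(2)`: the space of all bilinear maps on `E₂`. -/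
abbrev W := V2 K →ₗ[K] V2 K →ₗ[K] V2 K

/-- The basis elements `α_{ij}^k` of `W(2)`, `alpha i j k (e t) (e l) = δ_{it} δ_{jl} • e k`
(indices shifted to `0,1`). -/
noncomputable def alpha (i j k : Fin 2) : W K :=
  LinearMap.mk₂ K (fun x y => (x i * y j) • e K k)
    (fun x x' y => by simp [add_mul, add_smul])
    (fun c x y => by simp [smul_smul, mul_assoc])
    (fun x y y' => by simp [mul_add, add_smul])
    (fun c x y => by simp [smul_smul]; ring_nf)

/-- The multiplication of the conservative algebra `W(2)`:
`(A·B)(x,y) = A(e₁, B(x,y)) − B(A(e₁,x), y) − B(x, A(e₁,y))`. -/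
noncomputable def mulW (A B : W K) : W K :=
  LinearMap.mk₂ K
    (fun x y => A (e K 0) (B x y) - B (A (e K 0) x) y - B x (A (e K 0) y))
    (fun x x' y => by simp only [map_add, LinearMap.add_apply]; abel)
    (fun c x y => by simp only [map_smul, LinearMap.smul_apply, smul_sub])
    (fun x y y' => by simp only [map_add, LinearMap.add_apply]; abel)
    (fun c x y => by simp only [map_smul, LinearMap.smul_apply, smul_sub])

end

set_option maxSynthPendingDepth 3
set_option synthInstance.maxHeartbeats 1000000
set_option maxHeartbeats 1000000

section

variable (K : Type*) [Field K] [CharZero K]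

/-- The nondegenerate skew-symmetric form on `E₂`. -/
noncomputable def omega (x y : V2 K) : K := x 0 * y 1 - x 1 * y 0

set_option linter.unusedSectionVars false

lemma alpha_apply (i j k : Fin 2) (x y : V2 K) : alpha K i j k x y = (x i * y j) • e K k := rfl

lemma e_apply (i j : Fin 2) : e K i j = if j = i then 1 else 0 := by
  simp [e, Pi.single_apply]

lemma decomp (x : V2 K) : x = x 0 • e K 0 + x 1 • e K 1 := by
  funext t; fin_cases t <;> simp [e, Pi.single_apply]

lemma ext2 {A B : W K} (h : ∀ i j, A (e K i) (e K j) = B (e K i) (e K j)) : A = B := by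
  refine LinearMap.ext fun x => LinearMap.ext fun y => ?_
  rw [decomp K x, decomp K y]
  simp [h]

lemma single_eq (i : Fin 2) : (Pi.single i 1 : V2 K) = fun j => if j = i then 1 else 0 := by
  funext j; simp [Pi.single_apply]

lemma trace_eq (f : V2 K →ₗ[K] V2 K) :
    LinearMap.trace K (V2 K) f = f (e K 0) 0 + f (e K 1) 1 := by
  rw [LinearMap.trace_eq_matrix_trace K (Pi.basisFun K (Fin 2)) f]
  simp [Matrix.trace, LinearMap.toMatrix, Fin.sum_univ_two, e, single_eq]

lemma Aval (A : W K) (x y : V2 K) (t : Fin 2) :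
    A x y t = x 0 * y 0 * A (e K 0) (e K 0) t + x 0 * y 1 * A (e K 0) (e K 1) t
      + x 1 * y 0 * A (e K 1) (e K 0) t + x 1 * y 1 * A (e K 1) (e K 1) t := by
  conv_lhs => rw [decomp K x, decomp K y]
  simp
  ring

lemma omega_of_coeffs (A : W K)
    (h0 : A (e K 0) (e K 0) 0 + A (e K 0) (e K 1) 1 = 0)
    (h1 : A (e K 1) (e K 0) 0 + A (e K 1) (e K 1) 1 = 0)
    (x y z : V2 K) : omega K (A x y) z + omega K y (A x z) = 0 := by
  simp only [omega]
  rw [Aval K A x y 0, Aval K A x y 1, Aval K A x z 0, Aval K A x z 1]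
  linear_combination (x 0 * (y 0 * z 1 - y 1 * z 0)) * h0 + (x 1 * (y 0 * z 1 - y 1 * z 0)) * h1

lemma coeffs_of_omega (A : W K)
    (h : ∀ x y z : V2 K, omega K (A x y) z + omega K y (A x z) = 0) (i : Fin 2) :
    A (e K i) (e K 0) 0 + A (e K i) (e K 1) 1 = 0 := by
  have := h (e K i) (e K 0) (e K 1)
  simp only [omega, e_apply] at this
  simpa using this

/-- The subalgebra `H₁` of `W₂`, consisting of the commutative bilinear operators
`A` on the symplectic space `(E₂, ⟨,⟩)` with `⟨A(x,y),z⟩ + ⟨y,A(x,z)⟩ = 0`, equals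
the span of `ξ₁−ξ₅, ξ₂−ξ₆, ξ₃, ξ₄`; in particular `H₁` coincides with `S₂`. -/
theorem H1_description :
    {A : W K | (∀ x y : V2 K, A x y = A y x) ∧
        ∀ x y z : V2 K, omega K (A x y) z + omega K y (A x z) = 0}
      = ↑(Submodule.span K {alpha K 0 0 0 - (alpha K 0 1 1 + alpha K 1 0 1),
          (alpha K 0 1 0 + alpha K 1 0 0) - alpha K 1 1 1,
          alpha K 1 1 0, alpha K 0 0 1}) ∧
    {A : W K | (∀ x y : V2 K, A x y = A y x) ∧
        ∀ x y z : V2 K, omega K (A x y) z + omega K y (A x z) = 0}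
      = {A : W K | (∀ x y : V2 K, A x y = A y x) ∧
        ∀ a : V2 K, LinearMap.trace K (V2 K) (A a) = 0} := by
  constructor
  · ext A
    simp only [Set.mem_setOf_eq, SetLike.mem_coe]
    constructor
    · rintro ⟨h1, h2⟩
      have hc0 := coeffs_of_omega K A h2 0
      have hc1 := coeffs_of_omega K A h2 1
      have hs : A (e K 1) (e K 0) = A (e K 0) (e K 1) := h1 _ _
      rw [hs] at hc1
      have hA : A = (A (e K 0) (e K 0) 0) • (alpha K 0 0 0 - (alpha K 0 1 1 + alpha K 1 0 1))
          + (A (e K 0) (e K 1) 0) • ((alpha K 0 1 0 + alpha K 1 0 0) - alpha K 1 1 1)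
          + (A (e K 1) (e K 1) 0) • (alpha K 1 1 0)
          + (A (e K 0) (e K 0) 1) • (alpha K 0 0 1) := by
        apply ext2
        intro i j
        funext t
        fin_cases i <;> fin_cases j <;> fin_cases t <;>
          simp [alpha_apply, e_apply, hs] <;> first
            | linear_combination -hc0
            | linear_combination -hc1
            | linear_combination hc0
            | linear_combination hc1
      rw [hA]
      refine Submodule.add_mem _ (Submodule.add_mem _ (Submodule.add_mem _
        (Submodule.smul_mem _ _ ?_) (Submodule.smul_mem _ _ ?_))
        (Submodule.smul_mem _ _ ?_)) (Submodule.smul_mem _ _ ?_) <;>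
        apply Submodule.subset_span <;> simp
    · intro hA
      induction hA using Submodule.span_induction with
      | mem g hg =>
        simp only [Set.mem_insert_iff, Set.mem_singleton_iff] at hg
        rcases hg with rfl | rfl | rfl | rfl <;>
          refine ⟨fun x y => ?_, omega_of_coeffs K _ ?_ ?_⟩ <;>
          first
            | (funext t; simp [alpha_apply, e_apply]; ring)
            | (simp [alpha_apply, e_apply])
      | zero => exact ⟨fun x y => by simp, fun x y z => by simp [omega]⟩
      | add B C _ _ hB hC =>
        refine ⟨fun x y => by simp [hB.1 x y, hC.1 x y], fun x y z => ?_⟩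
        have h1 := hB.2 x y z
        have h2 := hC.2 x y z
        simp only [LinearMap.add_apply, Pi.add_apply, omega] at *
        linear_combination h1 + h2
      | smul c B _ hB =>
        refine ⟨fun x y => by simp [hB.1 x y], fun x y z => ?_⟩
        have h1 := hB.2 x y z
        simp only [LinearMap.smul_apply, Pi.smul_apply, smul_eq_mul, omega] at *
        linear_combination c * h1
  · ext A
    simp only [Set.mem_setOf_eq]
    constructor
    · rintro ⟨h1, h2⟩
      refine ⟨h1, fun a => ?_⟩
      have hc0 := coeffs_of_omega K A h2 0
      have hc1 := coeffs_of_omega K A h2 1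
      rw [trace_eq, Aval K A a (e K 0) 0, Aval K A a (e K 1) 1]
      simp only [e_apply]
      norm_num
      linear_combination a 0 * hc0 + a 1 * hc1
    · rintro ⟨h1, h2⟩
      refine ⟨h1, ?_⟩
      have hc : ∀ i, A (e K i) (e K 0) 0 + A (e K i) (e K 1) 1 = 0 := by
        intro i
        have := h2 (e K i)
        rw [trace_eq] at this
        exact this
      exact omega_of_coeffs K A (hc 0) (hc 1)


end
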